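/- arXiv:0902.1954 — 2 statements merged into one kernel-verified Lean document; each statement's English description precedes it below -/
import Mathlib

section
/- For every n ≥ 0, the inclusion (∂Δ[n] × Δ[1]) ∪ (Δ[n] × {0}) → Δ[n] × Δ[1] is a finite composition of pushouts of horn inclusions of the form Λ^k[n+1] → Δ[n+1] with 0 ≤ k < n+1; in particular, it is a left anodyne extension, i.e. it belongs to the smallest class of morphisms of simplicial sets containing the horn inclusions Λ^k[m] → Δ[m] (m ≥ 1, 0 ≤ k < m) and closed under pushouts, transfinite compositions and retracts. -/
open CategoryTheory CategoryTheory.Limits Simplicial MonoidalCategory SSet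

universe u

/-- A morphism `f` is a retract of a morphism `g` in the arrow category. -/
def RetractArrow {A B X Y : SSet.{u}} (f : A ⟶ B) (g : X ⟶ Y) : Prop :=
  ∃ (s : Arrow.mk f ⟶ Arrow.mk g) (r : Arrow.mk g ⟶ Arrow.mk f), s ≫ r = 𝟙 _

/-- The inclusion functor of the subset `{i | i < j}` of a preorder `J` into `J`. -/
def iioFunctor {J : Type} [Preorder J] (j : J) : Set.Iio j ⥤ J where
  obj i := i.1
  map φ := homOfLE (leOfHom φ)

/-- The cocone on the restriction of a functor `F : J ⥤ SSet` to `{i | i < j}`,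
with apex `F.obj j`; asking it to be colimiting expresses that `F` is continuous
at the limit element `j`. -/
def coconeAt {J : Type} [Preorder J] (F : J ⥤ SSet.{u}) (j : J) :
    Cocone (iioFunctor j ⋙ F) where
  pt := F.obj j
  ι :=
    { app := fun i => F.map (homOfLE i.2.le)
      naturality := fun i i' φ => by
        dsimp [iioFunctor]
        rw [Category.comp_id, ← F.map_comp]
        rfl }

/-- A class of morphisms of simplicial sets is weakly saturated if it is closed under
pushouts, retracts and transfinite compositions. -/
structure IsWeaklySaturated (W : MorphismProperty SSet.{u}) : Prop where
  pushout : ∀ {A B X Y : SSet.{u}} {t : A ⟶ X} {f : A ⟶ B} {g : X ⟶ Y} {b : B ⟶ Y},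
      IsPushout t f g b → W f → W g
  retract : ∀ {A B X Y : SSet.{u}} {f : A ⟶ B} {g : X ⟶ Y},
      _root_.RetractArrow f g → W g → W f
  transfinite : ∀ (J : Type) [LinearOrder J] [OrderBot J] [SuccOrder J] [WellFoundedLT J]
      (F : J ⥤ SSet.{u}),
      (∀ j : J, ¬ IsMax j → W (F.map (homOfLE (Order.le_succ j)))) →
      (∀ j : J, Order.IsSuccLimit j → Nonempty (IsColimit (coconeAt F j))) →
      ∀ (c : Cocone F), IsColimit c → W (c.ι.app ⊥)

/-- The class of left horn inclusions `Λ[m, k] → Δ[m]`, `m ≥ 1`, `0 ≤ k < m`. -/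
def LeftHornIncls : MorphismProperty SSet.{u} := fun _ _ f =>
  ∃ (m : ℕ) (k : Fin (m + 1)), (k : ℕ) < m ∧ Arrow.mk f = Arrow.mk ((horn m k).ι)

/-- A left anodyne extension: a morphism belonging to the smallest class of morphisms of
simplicial sets containing the left horn inclusions and closed under pushouts,
transfinite compositions and retracts. -/
def LeftAnodyne {A B : SSet.{u}} (f : A ⟶ B) : Prop :=
  ∀ W : MorphismProperty SSet.{u}, IsWeaklySaturated W →
    (∀ {X Y : SSet.{u}} (g : X ⟶ Y), LeftHornIncls g → W g) → W f

/-- `f` is a pushout of some morphism belonging to the class `S`. -/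
def IsPushoutOfMem (S : MorphismProperty SSet.{u}) {A B : SSet.{u}} (f : A ⟶ B) : Prop :=
  ∃ (X Y : SSet.{u}) (g : X ⟶ Y) (t : X ⟶ A) (b : Y ⟶ B), S g ∧ IsPushout t g f b

/-- Finite (nonempty) compositions of pushouts of morphisms belonging to `S`. -/
inductive FiniteCompOfPushouts (S : MorphismProperty SSet.{u}) :
    ∀ {A B : SSet.{u}}, (A ⟶ B) → Prop
| of {A B : SSet.{u}} (f : A ⟶ B) : IsPushoutOfMem S f → FiniteCompOfPushouts S f
| comp {A B C : SSet.{u}} (f : A ⟶ B) (g : B ⟶ C) :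
      FiniteCompOfPushouts S f → IsPushoutOfMem S g → FiniteCompOfPushouts S (f ≫ g)

/-- The vertex `e` of `Δ[1]`, as a morphism `Δ[0] ⟶ Δ[1]`. -/
def vertexMap (e : Fin 2) : (Δ[0] : SSet.{u}) ⟶ Δ[1] :=
  SSet.stdSimplex.map (SimplexCategory.const _ _ e)

/-- The union `(∂Δ[n] × Δ[1]) ∪ (Δ[n] × {e})` inside `Δ[n] × Δ[1]`, i.e. the pushout
of `∂Δ[n] × Δ[1]` and `Δ[n] × {e}` over `∂Δ[n] × {e}`. -/
noncomputable def boundaryCorner (n : ℕ) (e : Fin 2) : SSet.{u} :=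
  pushout ((∂Δ[n] : SSet.{u}) ◁ vertexMap e) ((boundary n).ι ▷ Δ[0])

/-- The inclusion `(∂Δ[n] × Δ[1]) ∪ (Δ[n] × {e}) → Δ[n] × Δ[1]`. -/
noncomputable def boundaryCornerIncl (n : ℕ) (e : Fin 2) :
    boundaryCorner.{u} n e ⟶ Δ[n] ⊗ Δ[1] :=
  pushout.desc ((boundary n).ι ▷ Δ[1]) (Δ[n] ◁ vertexMap e)
    (whisker_exchange ((boundary n).ι) (vertexMap e))

namespace BCA
open SimplexCategory SSet.stdSimplex

noncomputable abbrev P (n : ℕ) : SSet.{u} := Δ[n] ⊗ Δ[1]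

/-- second-coordinate structure map `[n+1] ⟶ [1]` of the `j`-th prism simplex -/
def τmap (n : ℕ) (j : Fin (n+1)) : (⦋n+1⦌ : SimplexCategory) ⟶ ⦋1⦌ :=
  SimplexCategory.mkHom ⟨fun p => if (p : ℕ) ≤ (j : ℕ) then 0 else 1, by
    intro a b hab
    dsimp only
    split_ifs with h1 h2
    · exact le_refl _
    · exact Fin.zero_le _
    · omega
    · exact le_refl _⟩

/-- the `j`-th nondegenerate `(n+1)`-simplex of `Δ[n] × Δ[1]` -/
def σ (n : ℕ) (j : Fin (n+1)) : (Δ[n+1] : SSet.{u}) ⟶ P n where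
  app m := ↾fun γ => ((SSet.stdSimplex.map (SimplexCategory.σ j)).app m γ,
              (SSet.stdSimplex.map (τmap n j)).app m γ)
  naturality m m' a := by
    refine ConcreteCategory.hom_ext _ _ fun γ => ?_
    exact Prod.ext (types_congr_hom ((SSet.stdSimplex.map (SimplexCategory.σ j)).naturality a) γ)
      (types_congr_hom ((SSet.stdSimplex.map (τmap n j)).naturality a) γ)

lemma σ_app_fst_val {n : ℕ} (j : Fin (n+1)) {m} (γ : (Δ[n+1] : SSet.{u}).obj m)
    (i : Fin (m.unop.len + 1)) :
    (asOrderHom ((σ n j).app m γ).1 i : ℕ) =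
      if (j : ℕ) < (asOrderHom γ i : ℕ) then (asOrderHom γ i : ℕ) - 1
      else (asOrderHom γ i : ℕ) := by
  show ((SimplexCategory.σ j).toOrderHom (asOrderHom γ i) : ℕ) = _
  show ((Fin.predAbove j (asOrderHom γ i)) : ℕ) = _
  by_cases h : Fin.castSucc j < asOrderHom γ i
  · rw [Fin.predAbove_of_castSucc_lt _ _ h, Fin.val_pred,
      if_pos (by simpa [Fin.lt_def] using h)]
  · rw [Fin.predAbove_of_le_castSucc _ _ (not_lt.mp h), Fin.coe_castPred,
      if_neg (by simp [Fin.lt_def] at h ⊢; omega)]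

lemma σ_app_snd_val {n : ℕ} (j : Fin (n+1)) {m} (γ : (Δ[n+1] : SSet.{u}).obj m)
    (i : Fin (m.unop.len + 1)) :
    (asOrderHom ((σ n j).app m γ).2 i : ℕ) =
      if (asOrderHom γ i : ℕ) ≤ (j : ℕ) then 0 else 1 := by
  show (((τmap n j).toOrderHom (asOrderHom γ i)) : ℕ) = _
  change (if ((asOrderHom γ i : ℕ)) ≤ (j : ℕ) then (0 : Fin 2) else 1).val = _
  split_ifs <;> rfl

lemma snd_val_lt {n : ℕ} {m} (x : (P n).obj m) (i) : (asOrderHom x.2 i : ℕ) < 2 :=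
  (asOrderHom x.2 i).isLt

/-- extensionality for simplices of a standard simplex via ℕ-values -/
lemma ssext {k : ℕ} {m} {x y : (Δ[k] : SSet.{u}).obj m}
    (h : ∀ i, (asOrderHom x i : ℕ) = (asOrderHom y i : ℕ)) : x = y := by
  obtain ⟨x⟩ := x; obtain ⟨y⟩ := y
  congr 1
  exact SimplexCategory.Hom.ext _ _ (OrderHom.ext _ _ (funext fun i => Fin.ext (h i)))

lemma pext {n : ℕ} {m} {x y : (P n).obj m}
    (h1 : ∀ i, (asOrderHom x.1 i : ℕ) = (asOrderHom y.1 i : ℕ))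
    (h2 : ∀ i, (asOrderHom x.2 i : ℕ) = (asOrderHom y.2 i : ℕ)) : x = y :=
  Prod.ext (ssext h1) (ssext h2)

end BCA

-- Part B : predicates and subpresheaves
namespace BCA
open SimplexCategory SSet.stdSimplex CategoryTheory.GrothendieckTopology

/-- `x` factors through the `j`-th prism simplex. -/
def Thru (n j : ℕ) {m} (x : (P n).obj m) : Prop :=
  ∀ i, ((asOrderHom x.2 i : ℕ) = 0 → (asOrderHom x.1 i : ℕ) ≤ j) ∧
       ((asOrderHom x.2 i : ℕ) = 1 → j ≤ (asOrderHom x.1 i : ℕ))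

/-- `x` lies in the corner `(∂Δ[n] × Δ[1]) ∪ (Δ[n] × {0})`. -/
abbrev Corner (n : ℕ) {m} (x : (P n).obj m) : Prop :=
  ¬ Function.Surjective (asOrderHom x.1) ∨ ∀ i, (asOrderHom x.2 i : ℕ) = 0

lemma map_fst_val {n : ℕ} {m m'} (a : m ⟶ m') (x : (P n).obj m) (i) :
    (asOrderHom ((P n).map a x).1 i : ℕ) = (asOrderHom x.1 (a.unop.toOrderHom i) : ℕ) := rfl

lemma map_snd_val {n : ℕ} {m m'} (a : m ⟶ m') (x : (P n).obj m) (i) :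
    (asOrderHom ((P n).map a x).2 i : ℕ) = (asOrderHom x.2 (a.unop.toOrderHom i) : ℕ) := rfl

lemma thru_map {n j : ℕ} {m m'} (a : m ⟶ m') {x : (P n).obj m} (h : Thru n j x) :
    Thru n j ((P n).map a x) := fun i => h (a.unop.toOrderHom i)

/-- The filtration: `X n j` is the union of the corner with the images of the
prism simplices `σ l`, `j ≤ l ≤ n`. -/
def X (n j : ℕ) : Subfunctor (P n) where
  obj m := {x | Corner n x ∨ ∃ l : ℕ, j ≤ l ∧ l ≤ n ∧ Thru n l x}
  map {m m'} a := by
    rintro x ((hb | hz) | ⟨l, h1, h2, h3⟩)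
    · refine Or.inl (Or.inl fun hs => hb ?_)
      intro w
      obtain ⟨i, hi⟩ := hs w
      exact ⟨a.unop.toOrderHom i, hi⟩
    · exact Or.inl (Or.inr fun i => hz (a.unop.toOrderHom i))
    · exact Or.inr ⟨l, h1, h2, thru_map a h3⟩

lemma X_succ_le (n j : ℕ) : X n (j+1) ≤ X n j := by
  rintro m x (h | ⟨l, h1, h2, h3⟩)
  · exact Or.inl h
  · exact Or.inr ⟨l, by omega, h2, h3⟩

lemma mem_X_iff {n j : ℕ} {m} (x : (P n).obj m) :
    x ∈ (X n j).obj m ↔ x ∈ (X n (j+1)).obj m ∨ (j ≤ n ∧ Thru n j x) := by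
  constructor
  · rintro (h | ⟨l, h1, h2, h3⟩)
    · exact Or.inl (Or.inl h)
    · rcases eq_or_lt_of_le h1 with rfl | h1'
      · exact Or.inr ⟨h2, h3⟩
      · exact Or.inl (Or.inr ⟨l, h1', h2, h3⟩)
  · rintro (h | ⟨h1, h2⟩)
    · exact X_succ_le n j _ h
    · exact Or.inr ⟨j, le_refl _, h1, h2⟩

lemma mem_X_top_iff {n : ℕ} {m} (x : (P n).obj m) :
    x ∈ (X n (n+1)).obj m ↔ Corner n x := by
  constructor
  · rintro (h | ⟨l, h1, h2, _⟩)
    · exact h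
    · omega
  · exact Or.inl

lemma mem_X_zero {n : ℕ} {m} (x : (P n).obj m) : x ∈ (X n 0).obj m := by
  classical
  by_cases hs : (Finset.univ.filter (fun i => (asOrderHom x.2 i : ℕ) = 0)).Nonempty
  · set i₀ := (Finset.univ.filter (fun i => (asOrderHom x.2 i : ℕ) = 0)).max' hs with hi₀
    have hz : (asOrderHom x.2 i₀ : ℕ) = 0 := by
      have := Finset.max'_mem _ hs
      rw [Finset.mem_filter] at this
      exact this.2
    refine Or.inr ⟨(asOrderHom x.1 i₀ : ℕ), Nat.zero_le _, by
      have := (asOrderHom x.1 i₀).isLt; omega, fun i => ⟨fun h0 => ?_, fun h1 => ?_⟩⟩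
    · have hi : i ≤ i₀ := Finset.le_max' _ i (Finset.mem_filter.mpr ⟨Finset.mem_univ _, h0⟩)
      exact (asOrderHom x.1).monotone hi
    · have hi : i₀ ≤ i := by
        by_contra hc
        have := (asOrderHom x.2).monotone (le_of_not_ge hc : i ≤ i₀)
        rw [Fin.le_def] at this
        omega
      exact (asOrderHom x.1).monotone hi
  · refine Or.inr ⟨0, le_refl _, Nat.zero_le _, fun i => ⟨fun h0 => absurd ?_ hs, fun _ => Nat.zero_le _⟩⟩
    exact ⟨i, Finset.mem_filter.mpr ⟨Finset.mem_univ _, h0⟩⟩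

lemma X_zero_eq_top (n : ℕ) : X n 0 = ⊤ := by
  apply Subfunctor.ext
  funext m
  exact Set.eq_univ_of_forall mem_X_zero

/-- the canonical lift of a simplex of the prism along `σ j` -/
def liftγ {n : ℕ} {m} (x : (P n).obj m) : (Δ[n+1] : SSet.{u}).obj m :=
  objMk ⟨fun i => if (asOrderHom x.2 i : ℕ) = 0 then (asOrderHom x.1 i).castSucc
                  else (asOrderHom x.1 i).succ, by
    intro a b hab
    have hf := (asOrderHom x.1).monotone hab
    have hg := (asOrderHom x.2).monotone hab
    rw [Fin.le_def] at hf hg ⊢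
    have h2a := (asOrderHom x.2 a).isLt
    have h2b := (asOrderHom x.2 b).isLt
    dsimp only
    split_ifs <;> simp only [Fin.coe_castSucc, Fin.val_succ] <;> omega⟩

lemma liftγ_val {n : ℕ} {m} (x : (P n).obj m) (i) :
    (asOrderHom (liftγ x) i : ℕ) =
      if (asOrderHom x.2 i : ℕ) = 0 then (asOrderHom x.1 i : ℕ)
      else (asOrderHom x.1 i : ℕ) + 1 := by
  show ((if (asOrderHom x.2 i : ℕ) = 0 then (asOrderHom x.1 i).castSucc
      else (asOrderHom x.1 i).succ) : Fin (n+2)).val = _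
  split_ifs <;> simp

lemma liftγ_map {n : ℕ} {m m'} (a : m ⟶ m') (x : (P n).obj m) :
    liftγ ((P n).map a x) = (Δ[n+1] : SSet.{u}).map a (liftγ x) := by
  apply ssext
  intro i
  have h1 : (asOrderHom ((Δ[n+1] : SSet.{u}).map a (liftγ x)) i : ℕ)
      = (asOrderHom (liftγ x : (Δ[n+1] : SSet.{u}).obj m) (a.unop.toOrderHom i) : ℕ) := rfl
  rw [h1, liftγ_val, liftγ_val, map_fst_val, map_snd_val]

lemma σ_liftγ {n : ℕ} (j : Fin (n+1)) {m} {x : (P n).obj m} (h : Thru n (j : ℕ) x) :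
    (σ n j).app m (liftγ x) = x := by
  apply pext <;> intro i
  · obtain ⟨ha, hb⟩ := h i
    have h2 := (asOrderHom x.2 i).isLt
    rw [σ_app_fst_val, liftγ_val]
    rcases (show (asOrderHom x.2 i : ℕ) = 0 ∨ (asOrderHom x.2 i : ℕ) = 1 by omega) with hg | hg
    · have := ha hg
      simp only [hg, if_true]
      rw [if_neg (not_lt.mpr this)]
    · have := hb hg
      simp only [hg]
      rw [if_neg one_ne_zero, if_pos (by omega)]
      omega
  · obtain ⟨ha, hb⟩ := h i
    have h2 := (asOrderHom x.2 i).isLt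
    rw [σ_app_snd_val, liftγ_val]
    rcases (show (asOrderHom x.2 i : ℕ) = 0 ∨ (asOrderHom x.2 i : ℕ) = 1 by omega) with hg | hg
    · have := ha hg
      simp only [hg, if_true]
      rw [if_pos this]
    · have := hb hg
      simp only [hg]
      rw [if_neg one_ne_zero, if_neg (by omega)]

lemma liftγ_σ {n : ℕ} (j : Fin (n+1)) {m} (γ : (Δ[n+1] : SSet.{u}).obj m) :
    liftγ ((σ n j).app m γ) = γ := by
  apply ssext
  intro i
  rw [liftγ_val, σ_app_fst_val, σ_app_snd_val]
  have := (asOrderHom γ i).isLt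
  rcases le_or_gt ((asOrderHom γ i : ℕ)) (j : ℕ) with h | h
  · rw [if_pos h, if_pos rfl, if_neg (not_lt.mpr h)]
  · rw [if_neg (not_le.mpr h), if_neg one_ne_zero, if_pos h]
    omega

lemma σ_inj {n : ℕ} (j : Fin (n+1)) {m} {γ γ' : (Δ[n+1] : SSet.{u}).obj m}
    (h : (σ n j).app m γ = (σ n j).app m γ') : γ = γ' := by
  rw [← liftγ_σ j γ, ← liftγ_σ j γ', h]

lemma thru_σ {n : ℕ} (j : Fin (n+1)) {m} (γ : (Δ[n+1] : SSet.{u}).obj m) :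
    Thru n (j : ℕ) ((σ n j).app m γ) := by
  intro i
  rw [σ_app_fst_val, σ_app_snd_val]
  have := (asOrderHom γ i).isLt
  rcases le_or_gt ((asOrderHom γ i : ℕ)) (j : ℕ) with h | h
  · rw [if_pos h, if_neg (not_lt.mpr h)]
    exact ⟨fun _ => h, fun h1 => absurd h1 (by omega)⟩
  · rw [if_neg (not_le.mpr h), if_pos h]
    exact ⟨fun h0 => absurd h0 (by omega), fun _ => by omega⟩

end BCA

-- Part C : the key combinatorial lemma
namespace BCA
open SimplexCategory SSet.stdSimplex CategoryTheory.GrothendieckTopology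

lemma horn_cond_iff {n : ℕ} {k : Fin (n+2)} {m} (γ : (Δ[n+1] : SSet.{u}).obj m) :
    (Set.range (asOrderHom γ) ∪ {k} ≠ Set.univ) ↔
      ∃ v : Fin (n+2), v ≠ k ∧ ∀ i, asOrderHom γ i ≠ v := by
  rw [Set.ne_univ_iff_exists_notMem]
  constructor
  · rintro ⟨v, hv⟩
    simp only [Set.mem_union, Set.mem_range, Set.mem_singleton_iff, not_or, not_exists] at hv
    exact ⟨v, hv.2, hv.1⟩
  · rintro ⟨v, hvk, hv⟩
    refine ⟨v, ?_⟩
    simp only [Set.mem_union, Set.mem_range, Set.mem_singleton_iff, not_or, not_exists]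
    exact ⟨hv, hvk⟩

theorem mem_succ_of_missing {n : ℕ} (j : Fin (n+1)) {m} (γ : (Δ[n+1] : SSet.{u}).obj m)
    (hm : ∃ v : Fin (n+2), v ≠ j.castSucc ∧ ∀ i, asOrderHom γ i ≠ v) :
    (σ n j).app m γ ∈ (X n ((j:ℕ)+1)).obj m := by
  obtain ⟨v, hvk, hmiss⟩ := hm
  have hvJ : (v : ℕ) ≠ (j : ℕ) := fun e => hvk (Fin.ext (by simpa using e))
  have hvlt : (v : ℕ) < n + 2 := v.isLt
  have hmiss' : ∀ i, (asOrderHom γ i : ℕ) ≠ (v : ℕ) := fun i e => hmiss i (Fin.ext e)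
  rcases (show (v : ℕ) < (j : ℕ) ∨ (v : ℕ) = (j : ℕ) + 1 ∨ (j : ℕ) + 2 ≤ (v : ℕ) by omega)
    with hV | hV | hV
  · refine Or.inl (Or.inl fun hs => ?_)
    obtain ⟨i, hi⟩ := hs ⟨(v : ℕ), by omega⟩
    have hval : (if (j : ℕ) < (asOrderHom γ i : ℕ) then (asOrderHom γ i : ℕ) - 1
        else (asOrderHom γ i : ℕ)) = (v : ℕ) := by
      have h' := congrArg Fin.val hi
      rw [σ_app_fst_val] at h'
      exact h'
    have := hmiss' i
    split_ifs at hval <;> omega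
  · rcases (show (j : ℕ) = n ∨ (j : ℕ) < n by have := j.isLt; omega) with hj | hj
    · refine Or.inl (Or.inr fun i => ?_)
      rw [σ_app_snd_val]
      have := (asOrderHom γ i).isLt
      have := hmiss' i
      rw [if_pos (by omega)]
    · refine Or.inr ⟨(j : ℕ) + 1, le_refl _, by omega, fun i => ?_⟩
      have := hmiss' i
      constructor
      · intro h0
        rw [σ_app_snd_val] at h0
        rw [σ_app_fst_val]
        by_cases hc : (asOrderHom γ i : ℕ) ≤ (j : ℕ)
        · rw [if_neg (not_lt.mpr hc)]
          omega
        · rw [if_neg hc] at h0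
          exact absurd h0 one_ne_zero
      · intro h1
        rw [σ_app_snd_val] at h1
        rw [σ_app_fst_val]
        by_cases hc : (asOrderHom γ i : ℕ) ≤ (j : ℕ)
        · rw [if_pos hc] at h1
          exact absurd h1 (by omega)
        · rw [if_pos (by omega)]
          omega
  · refine Or.inl (Or.inl fun hs => ?_)
    obtain ⟨i, hi⟩ := hs ⟨(v : ℕ) - 1, by omega⟩
    have hval : (if (j : ℕ) < (asOrderHom γ i : ℕ) then (asOrderHom γ i : ℕ) - 1
        else (asOrderHom γ i : ℕ)) = (v : ℕ) - 1 := by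
      have h' := congrArg Fin.val hi
      rw [σ_app_fst_val] at h'
      exact h'
    have := hmiss' i
    have hlt := (asOrderHom γ i).isLt
    split_ifs at hval <;> omega

theorem missing_of_mem_succ {n : ℕ} (j : Fin (n+1)) {m} (γ : (Δ[n+1] : SSet.{u}).obj m)
    (hmem : (σ n j).app m γ ∈ (X n ((j:ℕ)+1)).obj m) :
    ∃ v : Fin (n+2), v ≠ j.castSucc ∧ ∀ i, asOrderHom γ i ≠ v := by
  by_contra hno
  push_neg at hno
  -- hno : ∀ v, v ≠ j.castSucc → ∃ i, asOrderHom γ i = v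
  have hhit : ∀ v : Fin (n+2), (v : ℕ) ≠ (j : ℕ) → ∃ i, (asOrderHom γ i : ℕ) = (v : ℕ) := by
    intro v hv
    obtain ⟨i, hi⟩ := hno v (fun e => hv (by rw [e]; simp))
    exact ⟨i, congrArg Fin.val hi⟩
  obtain ⟨i₁, hi₁⟩ := hhit ⟨(j : ℕ) + 1, by omega⟩ (by simp)
  rcases hmem with (hb | hz) | ⟨l, h1, h2, hthru⟩
  · apply hb
    intro w
    by_cases hw : (w : ℕ) < (j : ℕ)
    · obtain ⟨i, hi⟩ := hhit ⟨(w : ℕ), by omega⟩ (by simp; omega)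
      refine ⟨i, Fin.ext ?_⟩
      rw [σ_app_fst_val]
      simp only [] at hi
      rw [if_neg (by omega)]
      exact hi
    · obtain ⟨i, hi⟩ := hhit ⟨(w : ℕ) + 1, by have := w.isLt; omega⟩ (by simp; omega)
      refine ⟨i, Fin.ext ?_⟩
      rw [σ_app_fst_val]
      simp only [] at hi
      rw [if_pos (by omega)]
      omega
  · have := hz i₁
    rw [σ_app_snd_val] at this
    simp only [] at hi₁
    rw [if_neg (by omega)] at this
    exact one_ne_zero this
  · have := (hthru i₁).2
    rw [σ_app_fst_val, σ_app_snd_val] at this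
    simp only [] at hi₁
    rw [if_neg (by omega), if_pos (by omega)] at this
    have := this rfl
    omega

end BCA

-- Part D : the pushout squares
namespace BCA
open SimplexCategory SSet.stdSimplex CategoryTheory.GrothendieckTopology

attribute [local instance] Classical.propDecidable

lemma nat_comp_apply {F G H : SSet.{u}} (f : F ⟶ G) (g : G ⟶ H) {m} (x : F.obj m) :
    (f ≫ g).app m x = g.app m (f.app m x) := rfl

/-- `σ j`, corestricted to `X j`. -/
def σres (n : ℕ) (j : Fin (n+1)) : (Δ[n+1] : SSet.{u}) ⟶ (X n (j:ℕ)).toFunctor where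
  app m := ↾fun γ => ⟨(σ n j).app m γ, Or.inr ⟨(j:ℕ), le_refl _, j.is_le, thru_σ j γ⟩⟩
  naturality m m' a := by
    refine ConcreteCategory.hom_ext _ _ fun γ => ?_
    exact Subtype.ext (types_congr_hom ((σ n j).naturality a) γ)

/-- `σ j` restricted to the horn, corestricted to `X (j+1)`. -/
def hornres (n : ℕ) (j : Fin (n+1)) :
    (Λ[n+1, j.castSucc] : SSet.{u}) ⟶ (X n ((j:ℕ)+1)).toFunctor where
  app m := ↾fun γ => ⟨(σ n j).app m γ.1, mem_succ_of_missing j γ.1 ((horn_cond_iff γ.1).mp γ.2)⟩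
  naturality m m' a := by
    refine ConcreteCategory.hom_ext _ _ fun γ => ?_
    exact Subtype.ext (types_congr_hom ((σ n j).naturality a) γ.1)

lemma step_comm (n : ℕ) (j : Fin (n+1)) :
    hornres n j ≫ Subfunctor.homOfLe (X_succ_le n (j:ℕ)) =
      (horn (n+1) j.castSucc).ι ≫ σres n j :=
  NatTrans.ext (funext fun m => ConcreteCategory.hom_ext _ _ fun γ => Subtype.ext rfl)

lemma thru_of_not_mem {n : ℕ} {j : Fin (n+1)} {m} {x : (P n).obj m}
    (hx : x ∈ (X n (j:ℕ)).obj m) (h : x ∉ (X n ((j:ℕ)+1)).obj m) : Thru n (j:ℕ) x :=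
  (((mem_X_iff x).mp hx).resolve_left h).2

lemma cond_elem {n : ℕ} {j : Fin (n+1)}
    (s : PushoutCocone (hornres n j) ((horn (n+1) j.castSucc).ι)) {m}
    (γ : (Δ[n+1] : SSet.{u}).obj m)
    (hγ : ∃ v : Fin (n+2), v ≠ j.castSucc ∧ ∀ i, asOrderHom γ i ≠ v)
    (h2 : (σ n j).app m γ ∈ (X n ((j:ℕ)+1)).obj m) :
    s.inl.app m ⟨(σ n j).app m γ, h2⟩ = s.inr.app m γ := by
  have h3 := types_congr_hom (NatTrans.congr_app s.condition m)
    (⟨γ, (horn_cond_iff γ).mpr hγ⟩ : (Λ[n+1, j.castSucc] : SSet.{u}).obj m)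
  exact (congrArg (s.inl.app m) (Subtype.ext rfl)).trans h3

/-- the descent map out of `X j` -/
noncomputable def stepDesc (n : ℕ) (j : Fin (n+1))
    (s : PushoutCocone (hornres n j) ((horn (n+1) j.castSucc).ι)) :
    (X n (j:ℕ)).toFunctor ⟶ s.pt where
  app m := ↾fun x =>
    if h : x.1 ∈ (X n ((j:ℕ)+1)).obj m then s.inl.app m ⟨x.1, h⟩
    else s.inr.app m (liftγ x.1)
  naturality m m' a := by
    refine ConcreteCategory.hom_ext _ _ fun xx => ?_
    obtain ⟨x, hx⟩ := xx
    show (if h : (P n).map a x ∈ (X n ((j:ℕ)+1)).obj m' then s.inl.app m' ⟨(P n).map a x, h⟩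
          else s.inr.app m' (liftγ ((P n).map a x)))
        = s.pt.map a (if h : x ∈ (X n ((j:ℕ)+1)).obj m then s.inl.app m ⟨x, h⟩
          else s.inr.app m (liftγ x))
    by_cases h1 : x ∈ (X n ((j:ℕ)+1)).obj m
    · rw [dif_pos h1,
        dif_pos (show (P n).map a x ∈ (X n ((j:ℕ)+1)).obj m' from (X n ((j:ℕ)+1)).map a h1)]
      exact types_congr_hom (s.inl.naturality a) (⟨x, h1⟩ : (X n ((j:ℕ)+1)).toFunctor.obj m)
    · have hthru : Thru n (j:ℕ) x := thru_of_not_mem hx h1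
      have hσ : (σ n j).app m (liftγ x) = x := σ_liftγ j hthru
      by_cases h2 : (P n).map a x ∈ (X n ((j:ℕ)+1)).obj m'
      · rw [dif_pos h2, dif_neg h1]
        have hγ' : (σ n j).app m' ((Δ[n+1] : SSet.{u}).map a (liftγ x)) = (P n).map a x := by
          conv_rhs => rw [← hσ]
          exact (types_congr_hom ((σ n j).naturality a) (liftγ x)).symm
        have hmiss := missing_of_mem_succ j ((Δ[n+1] : SSet.{u}).map a (liftγ x))
          (by rw [hγ']; exact h2)
        calc s.inl.app m' ⟨(P n).map a x, h2⟩
            = s.inl.app m' ⟨(σ n j).app m' ((Δ[n+1] : SSet.{u}).map a (liftγ x)),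
                by rw [hγ']; exact h2⟩ := congrArg _ (Subtype.ext hγ'.symm)
          _ = s.inr.app m' ((Δ[n+1] : SSet.{u}).map a (liftγ x)) := cond_elem s _ hmiss _
          _ = s.pt.map a (s.inr.app m (liftγ x)) :=
              types_congr_hom (s.inr.naturality a) (liftγ x)
      · rw [dif_neg h2, dif_neg h1, liftγ_map]
        exact types_congr_hom (s.inr.naturality a) (liftγ x)

theorem step_isPushout (n : ℕ) (j : Fin (n+1)) :
    IsPushout (hornres n j) ((horn (n+1) j.castSucc).ι)
      (Subfunctor.homOfLe (X_succ_le n (j:ℕ))) (σres n j) := by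
  refine IsPushout.of_isColimit' ⟨step_comm n j⟩ ?_
  refine PushoutCocone.IsColimit.mk _ (fun s => stepDesc n j s) (fun s => ?_) (fun s => ?_)
    (fun s w hw1 hw2 => ?_)
  · apply NatTrans.ext
    funext m
    refine ConcreteCategory.hom_ext _ _ fun xx => ?_
    obtain ⟨x, hx⟩ := xx
    erw [nat_comp_apply]
    show (if h : x ∈ (X n ((j:ℕ)+1)).obj m then s.inl.app m ⟨x, h⟩
          else s.inr.app m (liftγ x)) = s.inl.app m ⟨x, hx⟩
    rw [dif_pos hx]
  · apply NatTrans.ext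
    funext m
    refine ConcreteCategory.hom_ext _ _ fun γ => ?_
    rw [nat_comp_apply]
    show (if h : (σ n j).app m γ ∈ (X n ((j:ℕ)+1)).obj m then s.inl.app m ⟨(σ n j).app m γ, h⟩
          else s.inr.app m (liftγ ((σ n j).app m γ))) = s.inr.app m γ
    by_cases h : (σ n j).app m γ ∈ (X n ((j:ℕ)+1)).obj m
    · rw [dif_pos h]
      exact cond_elem s γ (missing_of_mem_succ j γ h) h
    · rw [dif_neg h, liftγ_σ]
  · apply NatTrans.ext
    funext m
    refine ConcreteCategory.hom_ext _ _ fun xx => ?_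
    obtain ⟨x, hx⟩ := xx
    show w.app m ⟨x, hx⟩ = (stepDesc n j s).app m ⟨x, hx⟩
    by_cases h : x ∈ (X n ((j:ℕ)+1)).obj m
    · have e1 : (⟨x, hx⟩ : (X n (j:ℕ)).toFunctor.obj m)
          = (Subfunctor.homOfLe (X_succ_le n (j:ℕ))).app m ⟨x, h⟩ := Subtype.ext rfl
      rw [e1]
      have h1' := types_congr_hom (NatTrans.congr_app hw1 m) (⟨x, h⟩ : (X n ((j:ℕ)+1)).toFunctor.obj m)
      erw [nat_comp_apply] at h1'
      refine Eq.trans h1' ?_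
      show s.inl.app m ⟨x, h⟩ = (if h' : x ∈ (X n ((j:ℕ)+1)).obj m then s.inl.app m ⟨x, h'⟩
          else s.inr.app m (liftγ x))
      rw [dif_pos h]
    · have hthru : Thru n (j:ℕ) x := thru_of_not_mem hx h
      have e1 : (⟨x, hx⟩ : (X n (j:ℕ)).toFunctor.obj m)
          = (σres n j).app m (liftγ x) := Subtype.ext (σ_liftγ j hthru).symm
      rw [e1]
      have h2' := types_congr_hom (NatTrans.congr_app hw2 m) (liftγ x)
      erw [nat_comp_apply] at h2'
      refine Eq.trans h2' ?_
      show s.inr.app m (liftγ x) = (if h' : (σ n j).app m (liftγ x) ∈ (X n ((j:ℕ)+1)).obj m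
          then s.inl.app m ⟨(σ n j).app m (liftγ x), h'⟩
          else s.inr.app m (liftγ ((σ n j).app m (liftγ x))))
      simp only [σ_liftγ j hthru]
      rw [dif_neg h]

end BCA

-- Part E : identification of the corner with X (n+1)
namespace BCA
open SimplexCategory SSet.stdSimplex CategoryTheory.GrothendieckTopology

/-- The canonical point of `Δ[0]`. -/
def pt0 (m : SimplexCategoryᵒᵖ) : (Δ[0] : SSet.{u}).obj m := SSet.stdSimplex.const 0 0 m

lemma δ0_subsingleton {m} (p q : (Δ[0] : SSet.{u}).obj m) : p = q :=
  ssext fun i => by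
    have h1 := (asOrderHom p i).isLt
    have h2 := (asOrderHom q i).isLt
    omega

lemma vm_app_val {m} (p : (Δ[0] : SSet.{u}).obj m) (i) :
    (asOrderHom ((vertexMap.{u} 0).app m p) i : ℕ) = 0 := rfl

lemma vm_eq {m} (y : (Δ[1] : SSet.{u}).obj m) (hy : ∀ i, (asOrderHom y i : ℕ) = 0) :
    (vertexMap.{u} 0).app m (pt0 m) = y :=
  ssext fun i => by rw [vm_app_val, hy i]

noncomputable abbrev pinl (n : ℕ) :
    ((∂Δ[n] : SSet.{u}) ⊗ Δ[1]) ⟶ boundaryCorner.{u} n 0 :=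
  pushout.inl ((∂Δ[n] : SSet.{u}) ◁ vertexMap 0) ((boundary n).ι ▷ Δ[0])

noncomputable abbrev pinr (n : ℕ) :
    ((Δ[n] : SSet.{u}) ⊗ Δ[0]) ⟶ boundaryCorner.{u} n 0 :=
  pushout.inr ((∂Δ[n] : SSet.{u}) ◁ vertexMap 0) ((boundary n).ι ▷ Δ[0])

/-- map `∂Δ[n] ⊗ Δ[1] ⟶ X (n+1)` -/
def uMap (n : ℕ) : ((∂Δ[n] : SSet.{u}) ⊗ Δ[1]) ⟶ (X n (n+1)).toFunctor where
  app m := ↾fun z => ⟨(z.1.1, z.2), Or.inl (Or.inl z.1.2)⟩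
  naturality m m' a := by
    refine ConcreteCategory.hom_ext _ _ fun z => ?_
    exact Subtype.ext rfl

/-- map `Δ[n] ⊗ Δ[0] ⟶ X (n+1)` -/
def vMap (n : ℕ) : ((Δ[n] : SSet.{u}) ⊗ Δ[0]) ⟶ (X n (n+1)).toFunctor where
  app m := ↾fun z => ⟨(z.1, (vertexMap.{u} 0).app m z.2), Or.inl (Or.inr fun i => vm_app_val z.2 i)⟩
  naturality m m' a := by
    refine ConcreteCategory.hom_ext _ _ fun z => ?_
    exact Subtype.ext (Prod.ext rfl (types_congr_hom ((vertexMap.{u} 0).naturality a) z.2))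

lemma uv_comm (n : ℕ) :
    ((∂Δ[n] : SSet.{u}) ◁ vertexMap 0) ≫ uMap n = ((boundary n).ι ▷ Δ[0]) ≫ vMap n :=
  NatTrans.ext (funext fun m => ConcreteCategory.hom_ext _ _ fun z => Subtype.ext rfl)

noncomputable def eHom (n : ℕ) : boundaryCorner.{u} n 0 ⟶ (X n (n+1)).toFunctor :=
  pushout.desc (uMap n) (vMap n) (uv_comm n)

lemma eHom_ι (n : ℕ) : eHom n ≫ Subfunctor.ι (X n (n+1)) = boundaryCornerIncl.{u} n 0 := by
  apply pushout.hom_ext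
  · erw [← Category.assoc]
    simp only [eHom, boundaryCornerIncl]
    rw [pushout.inl_desc, pushout.inl_desc]
    exact NatTrans.ext (funext fun m => ConcreteCategory.hom_ext _ _ fun z => rfl)
  · erw [← Category.assoc]
    simp only [eHom, boundaryCornerIncl]
    rw [pushout.inr_desc, pushout.inr_desc]
    exact NatTrans.ext (funext fun m => ConcreteCategory.hom_ext _ _ fun z => rfl)

lemma glue (n : ℕ) {m} (α : (∂Δ[n] : SSet.{u}).obj m) (p : (Δ[0] : SSet.{u}).obj m) :
    (pinl n).app m (α, (vertexMap.{u} 0).app m p)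
      = (pinr n).app m ((α.1 : (Δ[n] : SSet.{u}).obj m), p) := by
  have h := types_congr_hom (NatTrans.congr_app
    (pushout.condition (f := (∂Δ[n] : SSet.{u}) ◁ vertexMap.{u} 0)
      (g := (boundary n).ι ▷ Δ[0])) m) (α, p)
  erw [nat_comp_apply, nat_comp_apply] at h
  exact h

attribute [local instance] Classical.propDecidable

lemma atZero_of_mem {n : ℕ} {m} {x : (P n).obj m} (hx : x ∈ (X n (n+1)).obj m)
    (hs : Function.Surjective (asOrderHom x.1)) : ∀ i, (asOrderHom x.2 i : ℕ) = 0 :=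
  ((mem_X_top_iff x).mp hx).resolve_left (not_not.mpr hs)

noncomputable def eInv (n : ℕ) : (X n (n+1)).toFunctor ⟶ boundaryCorner.{u} n 0 where
  app m := ↾fun x =>
    if hb : ¬ Function.Surjective (asOrderHom x.1.1)
    then (pinl n).app m ((⟨x.1.1, hb⟩ : (∂Δ[n] : SSet.{u}).obj m), x.1.2)
    else (pinr n).app m (x.1.1, pt0 m)
  naturality m m' a := by
    refine ConcreteCategory.hom_ext _ _ fun xx => ?_
    obtain ⟨x, hx⟩ := xx
    show (if hb : ¬ Function.Surjective (asOrderHom ((P n).map a x).1)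
        then (pinl n).app m' ((⟨((P n).map a x).1, hb⟩ : (∂Δ[n] : SSet.{u}).obj m'),
          ((P n).map a x).2)
        else (pinr n).app m' (((P n).map a x).1, pt0 m'))
      = (boundaryCorner.{u} n 0).map a
        (if hb : ¬ Function.Surjective (asOrderHom x.1)
         then (pinl n).app m ((⟨x.1, hb⟩ : (∂Δ[n] : SSet.{u}).obj m), x.2)
         else (pinr n).app m (x.1, pt0 m))
    by_cases hb : ¬ Function.Surjective (asOrderHom x.1)
    · have hb' : ¬ Function.Surjective (asOrderHom ((P n).map a x).1) :=
        fun hs => hb (Function.Surjective.of_comp hs)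
      rw [dif_pos hb, dif_pos hb']
      exact types_congr_hom ((pinl n).naturality a) ((⟨x.1, hb⟩ : (∂Δ[n] : SSet.{u}).obj m), x.2)
    · push_neg at hb
      have hz : ∀ i, (asOrderHom x.2 i : ℕ) = 0 := atZero_of_mem hx hb
      have hz' : ∀ i, (asOrderHom ((P n).map a x).2 i : ℕ) = 0 :=
        fun i => hz (a.unop.toOrderHom i)
      have hinr := types_congr_hom ((pinr n).naturality a) (x.1, pt0 m)
      erw [types_comp_apply, types_comp_apply] at hinr
      rw [dif_neg (not_not.mpr hb)]
      by_cases hb' : ¬ Function.Surjective (asOrderHom ((P n).map a x).1)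
      · rw [dif_pos hb']
        have e2 : ((P n).map a x).2 = (vertexMap.{u} 0).app m' (pt0 m') := (vm_eq _ hz').symm
        calc (pinl n).app m'
              ((⟨((P n).map a x).1, hb'⟩ : (∂Δ[n] : SSet.{u}).obj m'), ((P n).map a x).2)
            = (pinl n).app m'
              ((⟨((P n).map a x).1, hb'⟩ : (∂Δ[n] : SSet.{u}).obj m'),
               (vertexMap.{u} 0).app m' (pt0 m')) := by rw [e2]
          _ = (pinr n).app m' (((P n).map a x).1, pt0 m') := glue n _ _
          _ = (pinr n).app m' (((Δ[n] : SSet.{u}) ⊗ Δ[0]).map a (x.1, pt0 m)) := by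
                rw [show ((Δ[n] : SSet.{u}) ⊗ Δ[0]).map a (x.1, pt0 m)
                    = ((((P n).map a x).1 : (Δ[n] : SSet.{u}).obj m'), pt0 m') from
                  Prod.ext rfl (δ0_subsingleton _ _)]
          _ = (boundaryCorner.{u} n 0).map a ((pinr n).app m (x.1, pt0 m)) := hinr
      · rw [dif_neg hb']
        refine Eq.trans ?_ hinr
        rw [show ((Δ[n] : SSet.{u}) ⊗ Δ[0]).map a (x.1, pt0 m)
            = ((((P n).map a x).1 : (Δ[n] : SSet.{u}).obj m'), pt0 m') from
          Prod.ext rfl (δ0_subsingleton _ _)]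

lemma u_eInv (n : ℕ) : uMap.{u} n ≫ eInv n = pinl n := by
  apply NatTrans.ext
  funext m
  refine ConcreteCategory.hom_ext _ _ fun z => ?_
  rw [nat_comp_apply]
  show (if hb : ¬ Function.Surjective (asOrderHom (z.1.1 : (Δ[n] : SSet.{u}).obj m))
      then (pinl n).app m ((⟨z.1.1, hb⟩ : (∂Δ[n] : SSet.{u}).obj m), z.2)
      else (pinr n).app m (z.1.1, pt0 m)) = (pinl n).app m z
  rw [dif_pos (show ¬ Function.Surjective (asOrderHom (z.1.1 : (Δ[n] : SSet.{u}).obj m)) from z.1.2)]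
  rfl

lemma v_eInv (n : ℕ) : vMap.{u} n ≫ eInv n = pinr n := by
  apply NatTrans.ext
  funext m
  refine ConcreteCategory.hom_ext _ _ fun z => ?_
  rw [nat_comp_apply]
  show (if hb : ¬ Function.Surjective (asOrderHom (z.1 : (Δ[n] : SSet.{u}).obj m))
      then (pinl n).app m ((⟨z.1, hb⟩ : (∂Δ[n] : SSet.{u}).obj m),
        (vertexMap.{u} 0).app m z.2)
      else (pinr n).app m (z.1, pt0 m)) = (pinr n).app m z
  by_cases hb : ¬ Function.Surjective (asOrderHom (z.1 : (Δ[n] : SSet.{u}).obj m))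
  · rw [dif_pos hb]
    exact glue n ⟨z.1, hb⟩ z.2
  · rw [dif_neg hb]
    exact congrArg ((pinr n).app m) (Prod.ext rfl (δ0_subsingleton _ _))

noncomputable def eIso (n : ℕ) : boundaryCorner.{u} n 0 ≅ (X n (n+1)).toFunctor where
  hom := eHom n
  inv := eInv n
  hom_inv_id := by
    apply pushout.hom_ext
    · erw [← Category.assoc]
      simp only [eHom]
      rw [pushout.inl_desc]
      exact (u_eInv n).trans (Category.comp_id _).symm
    · erw [← Category.assoc]
      simp only [eHom]
      rw [pushout.inr_desc]
      exact (v_eInv n).trans (Category.comp_id _).symm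
  inv_hom_id := by
    apply NatTrans.ext
    funext m
    refine ConcreteCategory.hom_ext _ _ fun xx => ?_
    obtain ⟨x, hx⟩ := xx
    erw [nat_comp_apply]
    show (eHom n).app m (if hb : ¬ Function.Surjective (asOrderHom x.1)
        then (pinl n).app m ((⟨x.1, hb⟩ : (∂Δ[n] : SSet.{u}).obj m), x.2)
        else (pinr n).app m (x.1, pt0 m)) = ⟨x, hx⟩
    by_cases hb : ¬ Function.Surjective (asOrderHom x.1)
    · rw [dif_pos hb]
      have h := types_congr_hom (NatTrans.congr_app
        (pushout.inl_desc (uMap.{u} n) (vMap n) (uv_comm n)) m)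
        (((⟨x.1, hb⟩ : (∂Δ[n] : SSet.{u}).obj m), x.2) : ((∂Δ[n] : SSet.{u}) ⊗ Δ[1]).obj m)
      erw [nat_comp_apply] at h
      exact h.trans (Subtype.ext rfl)
    · rw [dif_neg hb]
      push_neg at hb
      have h := types_congr_hom (NatTrans.congr_app
        (pushout.inr_desc (uMap.{u} n) (vMap n) (uv_comm n)) m)
        ((x.1, pt0 m) : ((Δ[n] : SSet.{u}) ⊗ Δ[0]).obj m)
      erw [nat_comp_apply] at h
      exact h.trans (Subtype.ext (Prod.ext rfl (vm_eq x.2 (atZero_of_mem hx hb))))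

end BCA

-- Part F : the finite composition of pushouts
namespace BCA
open SimplexCategory SSet.stdSimplex CategoryTheory.GrothendieckTopology

def Sprop (n : ℕ) : MorphismProperty SSet.{u} := fun _ _ f =>
  ∃ k : Fin (n + 2), (k : ℕ) < n + 1 ∧ Arrow.mk f = Arrow.mk ((horn (n + 1) k).ι)

lemma step_mem (n : ℕ) (j : Fin (n+1)) :
    IsPushoutOfMem (Sprop.{u} n) (Subfunctor.homOfLe (X_succ_le n (j:ℕ))) :=
  ⟨_, _, (horn (n+1) j.castSucc).ι, hornres n j, σres n j,
    ⟨j.castSucc, by simpa using j.isLt, rfl⟩, step_isPushout n j⟩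

lemma pom_comp_iso {Sp : MorphismProperty SSet.{u}} {A B C : SSet.{u}} {f : A ⟶ B}
    (hf : IsPushoutOfMem Sp f) (g : B ≅ C) : IsPushoutOfMem Sp (f ≫ g.hom) := by
  obtain ⟨X, Y, h, t, b, hS, hpo⟩ := hf
  exact ⟨X, Y, h, t, b ≫ g.hom, hS,
    hpo.of_iso (Iso.refl _) (Iso.refl _) (Iso.refl _) g (by simp) (by simp) (by simp) (by simp)⟩

lemma fcp_comp_iso {Sp : MorphismProperty SSet.{u}} {A B : SSet.{u}} {f : A ⟶ B}
    (hf : FiniteCompOfPushouts Sp f) : ∀ {C : SSet.{u}} (g : B ≅ C),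
      FiniteCompOfPushouts Sp (f ≫ g.hom) := by
  induction hf with
  | of f h => exact fun g => .of _ (pom_comp_iso h g)
  | comp f1 g1 h1 h2 ih =>
      intro C g
      rw [Category.assoc]
      exact .comp f1 (g1 ≫ g.hom) h1 (pom_comp_iso h2 g)

lemma step_mem_base (n : ℕ) :
    IsPushoutOfMem (Sprop.{u} n) ((eIso.{u} n).hom ≫ Subfunctor.homOfLe (X_succ_le n n)) := by
  refine ⟨_, _, (horn (n+1) (Fin.last n).castSucc).ι,
    hornres n (Fin.last n) ≫ (eIso.{u} n).inv, σres n (Fin.last n),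
    ⟨(Fin.last n).castSucc, by simpa using (Fin.last n).isLt, rfl⟩, ?_⟩
  exact (step_isPushout n (Fin.last n)).of_iso (Iso.refl _) (eIso.{u} n).symm (Iso.refl _)
    (Iso.refl _) (by simp) (by simp) (by simp) (by simp)

lemma X_anti {n j j' : ℕ} (h : j ≤ j') : X n j' ≤ X n j := by
  rintro m x (hc | ⟨l, h1, h2, h3⟩)
  · exact Or.inl hc
  · exact Or.inr ⟨l, le_trans h h1, h2, h3⟩

lemma homOfLe_trans {F : SimplexCategoryᵒᵖ ⥤ Type u} {G1 G2 G3 : Subfunctor F}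
    (h12 : G1 ≤ G2) (h23 : G2 ≤ G3) :
    Subfunctor.homOfLe h12 ≫ Subfunctor.homOfLe h23
      = Subfunctor.homOfLe (le_trans h12 h23) :=
  NatTrans.ext (funext fun m => ConcreteCategory.hom_ext _ _ fun x => Subtype.ext rfl)

/-- auxiliary predicate: the partial composite up to `X j` is a finite composition
of pushouts of left horn inclusions. -/
def Qprop (n j : ℕ) : Prop :=
  ∃ h : X.{u} n (n+1) ≤ X n j,
    FiniteCompOfPushouts (Sprop.{u} n) ((eIso.{u} n).hom ≫ Subfunctor.homOfLe h)

lemma Q_base (n : ℕ) : Qprop.{u} n n :=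
  ⟨X_succ_le n n, .of _ (step_mem_base n)⟩

lemma Q_step (n j : ℕ) (hj : j ≤ n) : Qprop.{u} n (j+1) → Qprop.{u} n j := by
  rintro ⟨h, hf⟩
  refine ⟨le_trans h (X_succ_le n j), ?_⟩
  have h3 := FiniteCompOfPushouts.comp _ _ hf (step_mem n ⟨j, by omega⟩)
  rwa [Category.assoc, homOfLe_trans] at h3

lemma Q_zero (n : ℕ) : Qprop.{u} n 0 := by
  have key : ∀ k, Qprop.{u} n (n - k) := by
    intro k
    induction k with
    | zero => exact Q_base n
    | succ k ih =>
      by_cases hk : k < n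
      · have e : n - k = (n - (k+1)) + 1 := by omega
        rw [e] at ih
        exact Q_step n (n - (k+1)) (by omega) ih
      · have e : n - (k+1) = n - k := by omega
        rw [e]
        exact ih
  have h := key n
  rwa [Nat.sub_self] at h

lemma isIso_ι_zero (n : ℕ) : IsIso (Subfunctor.ι (X.{u} n 0)) := by
  rw [X_zero_eq_top]
  infer_instance

theorem part1 (n : ℕ) : FiniteCompOfPushouts (Sprop.{u} n) (boundaryCornerIncl.{u} n 0) := by
  obtain ⟨h, hf⟩ := Q_zero.{u} n
  haveI := isIso_ι_zero n
  have hfc := fcp_comp_iso hf (asIso (Subfunctor.ι (X.{u} n 0)))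
  have heq : ((eIso.{u} n).hom ≫ Subfunctor.homOfLe h) ≫
      (asIso (Subfunctor.ι (X.{u} n 0))).hom = boundaryCornerIncl.{u} n 0 := by
    rw [Category.assoc]
    show (eIso.{u} n).hom ≫ Subfunctor.homOfLe h ≫ Subfunctor.ι (X.{u} n 0) = _
    rw [Subfunctor.homOfLe_ι]
    exact eHom_ι n
  rwa [heq] at hfc

end BCA

-- Part G : weakly saturated classes and left anodyne
namespace BCA

lemma natHomSubsingleton {a b : ℕ} (u v : a ⟶ b) : u = v := Subsingleton.elim u v

lemma ws_id {W : MorphismProperty SSet.{u}} (hW : IsWeaklySaturated.{u} W) (Z : SSet.{u}) :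
    W (𝟙 Z) := by
  let F : Fin 1 ⥤ SSet.{u} := (Functor.const (Fin 1)).obj Z
  let c : Cocone F := { pt := Z, ι := 𝟙 F }
  have hc : IsColimit c :=
    { desc := fun s => s.ι.app 0
      fac := fun s j => by
        have : j = 0 := Subsingleton.elim _ _
        subst this
        exact Category.id_comp _
      uniq := fun s w hw => by
        refine Eq.trans ?_ (hw 0)
        exact (Category.id_comp w).symm }
  have hmax : ∀ j : Fin 1, IsMax j := fun j b _ => le_of_eq (Subsingleton.elim b j)
  have hmin : ∀ j : Fin 1, IsMin j := fun j b _ => le_of_eq (Subsingleton.elim j b)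
  haveI hwf : WellFoundedLT (Fin 1) := inferInstance
  exact hW.transfinite (Fin 1) F (fun j hj => absurd (hmax j) hj)
    (fun j hj => absurd hj ((hmin j).not_isSuccLimit)) c hc

/-- objects of the sequence `A ⟶ B ⟶ C ⟶ C ⟶ ⋯` -/
def seqObj (A B C : SSet.{u}) : ℕ → SSet.{u}
| 0 => A
| 1 => B
| _+2 => C

/-- maps of the sequence `A ⟶ B ⟶ C ⟶ C ⟶ ⋯` -/
def seqMap {A B C : SSet.{u}} (f : A ⟶ B) (g : B ⟶ C) :
    ∀ k, seqObj A B C k ⟶ seqObj A B C (k+1)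
| 0 => f
| 1 => g
| _+2 => 𝟙 C

/-- legs of the cocone on the sequence `A ⟶ B ⟶ C ⟶ C ⟶ ⋯` -/
def seqApp {A B C : SSet.{u}} (f : A ⟶ B) (g : B ⟶ C) : ∀ k, seqObj A B C k ⟶ C
| 0 => f ≫ g
| 1 => g
| _+2 => 𝟙 C

lemma ws_comp {W : MorphismProperty SSet.{u}} (hW : IsWeaklySaturated.{u} W)
    {A B C : SSet.{u}} {f : A ⟶ B} {g : B ⟶ C} (hf : W f) (hg : W g) : W (f ≫ g) := by
  set F : ℕ ⥤ SSet.{u} := Functor.ofSequence (seqMap f g) with hF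
  have hstep : ∀ k : ℕ, F.map (homOfLE (Nat.le_add_right k 1)) = seqMap f g k :=
    fun k => Functor.ofSequence_map_homOfLE_succ (seqMap f g) k
  have hconst : ∀ (k k' : ℕ) (h : k + 2 ≤ k' + 2), F.map (homOfLE h) = 𝟙 C := by
    intro k k'
    induction k' with
    | zero =>
      intro h
      have hk : k = 0 := by omega
      subst hk
      rw [natHomSubsingleton (homOfLE h) (𝟙 (2:ℕ))]
      exact F.map_id _
    | succ k' ih =>
      intro h
      by_cases hk : k = k' + 1
      · subst hk
        rw [natHomSubsingleton (homOfLE h) (𝟙 (k'+3:ℕ))]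
        exact F.map_id _
      · have h1 : k + 2 ≤ k' + 2 := by omega
        rw [natHomSubsingleton (homOfLE h)
          (homOfLE h1 ≫ homOfLE (Nat.le_add_right (k'+2) 1)), F.map_comp, ih h1,
          hstep (k'+2)]
        show 𝟙 C ≫ 𝟙 C = 𝟙 C
        rw [Category.id_comp]
  have hnat : ∀ k : ℕ, F.map (homOfLE (Nat.le_add_right k 1)) ≫ seqApp f g (k+1)
      = seqApp f g k ≫ ((Functor.const ℕ).obj C).map (homOfLE (Nat.le_add_right k 1)) := by
    intro k
    rw [hstep k]
    rcases k with _|_|m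
    · show f ≫ g = (f ≫ g) ≫ 𝟙 C
      rw [Category.comp_id]
    · show g ≫ 𝟙 C = g ≫ 𝟙 C
      rfl
    · show 𝟙 C ≫ 𝟙 C = 𝟙 C ≫ 𝟙 C
      rfl
  let c : Cocone F := { pt := C, ι := NatTrans.ofSequence (seqApp f g) (fun k => hnat k) }
  have happ : ∀ k, c.ι.app k = seqApp f g k := fun k => rfl
  have hfac : ∀ (k : ℕ) (h : k ≤ 2), F.map (homOfLE h) ≫ seqApp f g 2 = seqApp f g k := by
    intro k h
    interval_cases k
    · rw [natHomSubsingleton (homOfLE h)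
        (homOfLE (Nat.le_add_right 0 1) ≫ homOfLE (Nat.le_add_right 1 1)), F.map_comp,
        hstep 0, hstep 1]
      show f ≫ g ≫ 𝟙 C = f ≫ g
      rw [Category.comp_id]
    · rw [natHomSubsingleton (homOfLE h) (homOfLE (Nat.le_add_right 1 1)), hstep 1]
      show g ≫ 𝟙 C = g
      rw [Category.comp_id]
    · rw [natHomSubsingleton (homOfLE h) (𝟙 (2:ℕ)), F.map_id]
      exact Category.id_comp _
  have hc : IsColimit c :=
    { desc := fun s => s.ι.app 2
      fac := fun s k => by
        rcases le_or_gt k 2 with hk | hk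
        · rw [happ k, ← hfac k hk]
          have h2 : seqApp f g 2 ≫ s.ι.app 2 = s.ι.app 2 := Category.id_comp _
          show F.map (homOfLE hk) ≫ seqApp f g 2 ≫ s.ι.app 2 = s.ι.app k
          erw [h2]
          exact s.w (homOfLE hk)
        · obtain ⟨k', rfl⟩ : ∃ k', k = k' + 3 := ⟨k - 3, by omega⟩
          rw [happ (k'+3)]
          have h2 : seqApp f g (k'+3) ≫ s.ι.app 2 = s.ι.app 2 := Category.id_comp _
          show seqApp f g (k'+3) ≫ s.ι.app 2 = s.ι.app (k' + 3)
          rw [h2]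
          have hw := s.w (homOfLE (show 2 ≤ k' + 3 by omega))
          rw [hconst 0 (k'+1) (show 0 + 2 ≤ (k'+1) + 2 by omega)] at hw
          have h3 : (𝟙 C : C ⟶ C) ≫ s.ι.app (k'+3) = s.ι.app (k'+3) := Category.id_comp _
          replace hw := h3.symm.trans hw
          exact hw.symm
      uniq := fun s w hw => by
        refine Eq.trans ?_ (hw 2)
        show w = seqApp f g 2 ≫ w
        exact (Category.id_comp w).symm }
  have hsucc : ∀ j : ℕ, ¬ IsMax j → W (F.map (homOfLE (Order.le_succ j))) := by
    intro j _
    have he : F.map (homOfLE (Order.le_succ j)) = seqMap f g j := by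
      rw [natHomSubsingleton (homOfLE (Order.le_succ j)) (homOfLE (Nat.le_add_right j 1))]
      exact hstep j
    rw [he]
    rcases j with _|_|m
    · exact hf
    · exact hg
    · exact ws_id hW C
  have hlim : ∀ j : ℕ, Order.IsSuccLimit j → Nonempty (IsColimit (coconeAt F j)) := by
    intro j hj
    exfalso
    rcases j with _|j
    · exact hj.1 isMin_bot
    · exact hj.2 j (Order.covBy_succ_of_not_isMax (not_isMax j))
  exact hW.transfinite ℕ F hsucc hlim c hc

lemma ws_arrow_eq {W : MorphismProperty SSet.{u}} (hW : IsWeaklySaturated.{u} W)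
    {A B X Y : SSet.{u}} {f : A ⟶ B} {g : X ⟶ Y} (h : Arrow.mk f = Arrow.mk g)
    (hg : W g) : W f :=
  hW.retract ⟨eqToHom h, eqToHom h.symm, by rw [eqToHom_trans, eqToHom_refl]⟩ hg

lemma leftAnodyne_of_fcp {Sp : MorphismProperty SSet.{u}}
    (hS : ∀ {X Y : SSet.{u}} {h : X ⟶ Y}, Sp h → LeftHornIncls.{u} h) :
    ∀ {A B : SSet.{u}} {f : A ⟶ B}, FiniteCompOfPushouts Sp f → LeftAnodyne f := by
  intro A B f hf W hW hh
  induction hf with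
  | of f h =>
    obtain ⟨X, Y, gg, t, b, hg, hpo⟩ := h
    exact hW.pushout hpo (hh gg (hS hg))
  | comp f1 g1 h1 h2 ih =>
    obtain ⟨X, Y, gg, t, b, hg, hpo⟩ := h2
    exact ws_comp hW ih (hW.pushout hpo (hh gg (hS hg)))

end BCA

/-- For every `n ≥ 0`, the inclusion `(∂Δ[n] × Δ[1]) ∪ (Δ[n] × {0}) → Δ[n] × Δ[1]` is a
finite composition of pushouts of horn inclusions `Λ[n+1, k] → Δ[n+1]` with
`0 ≤ k < n + 1`; in particular, it is a left anodyne extension. -/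
theorem boundaryCornerIncl_zero_finiteCompOfPushouts_and_leftAnodyne (n : ℕ) :
    FiniteCompOfPushouts
      (fun _ _ f => ∃ k : Fin (n + 2), (k : ℕ) < n + 1 ∧
        Arrow.mk f = Arrow.mk ((horn (n + 1) k).ι))
      (boundaryCornerIncl.{u} n 0) ∧
    LeftAnodyne (boundaryCornerIncl.{u} n 0) := by
  refine ⟨BCA.part1.{u} n, ?_⟩
  exact BCA.leftAnodyne_of_fcp
    (fun {X Y h} hS => by
      obtain ⟨k, hk, he⟩ := hS
      exact ⟨n+1, k, hk, he⟩)
    (BCA.part1.{u} n)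
end

section
/- For all n ≥ 1 and 0 ≤ k < n, the horn inclusion Λ^k[n] → Δ[n] is a retract, in the arrow category of simplicial sets, of the inclusion (Λ^k[n] × Δ[1]) ∪ (Δ[n] × {0}) → Δ[n] × Δ[1]. -/
open CategoryTheory CategoryTheory.Limits Simplicial MonoidalCategory SSet

universe u

/-- The union `(Λ[n, i] × Δ[1]) ∪ (Δ[n] × {e})` inside `Δ[n] × Δ[1]`, i.e. the pushout
of `Λ[n, i] × Δ[1]` and `Δ[n] × {e}` over `Λ[n, i] × {e}`. -/
noncomputable def hornCorner (n : ℕ) (i : Fin (n + 1)) (e : Fin 2) : SSet.{u} :=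
  pushout ((Λ[n, i] : SSet.{u}) ◁ vertexMap e) (Λ[n, i].ι ▷ Δ[0])

/-- The inclusion `(Λ[n, i] × Δ[1]) ∪ (Δ[n] × {e}) → Δ[n] × Δ[1]`. -/
noncomputable def hornCornerIncl (n : ℕ) (i : Fin (n + 1)) (e : Fin 2) :
    hornCorner.{u} n i e ⟶ Δ[n] ⊗ Δ[1] :=
  pushout.desc (Λ[n, i].ι ▷ Δ[1]) (Δ[n] ◁ vertexMap e)
    (whisker_exchange (Λ[n, i].ι) (vertexMap e))

namespace HornRetractAux

variable {n : ℕ} (i : Fin (n + 1))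

/-- The retraction order-hom: `(t ↦ if y t = 0 then min (x t) i else x t)`. -/
def retrHom {m : ℕ} (x : Fin (m + 1) →o Fin (n + 1)) (y : Fin (m + 1) →o Fin 2) :
    Fin (m + 1) →o Fin (n + 1) where
  toFun t := if y t = 0 then min (x t) i else x t
  monotone' t s h := by
    have hx := x.monotone h
    have hy := y.monotone h
    by_cases h1 : y t = 0 <;> by_cases h2 : y s = 0 <;>
      simp only [h1, h2, if_pos, if_neg, if_true, if_false]
    · exact min_le_min hx le_rfl
    · exact (min_le_left _ _).trans hx
    · exact absurd (Fin.le_zero_iff.mp (h2 ▸ hy)) h1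
    · exact hx

lemma retr_mem {m : SimplexCategoryᵒᵖ} (x : Fin (m.unop.len + 1) →o Fin (n + 1))
    (y : Fin (m.unop.len + 1) →o Fin 2)
    (hx : Set.range x ∪ {i} ≠ Set.univ) :
    Set.range (retrHom i x y) ∪ {i} ≠ Set.univ := by
  obtain ⟨l, hl⟩ := (Set.ne_univ_iff_exists_notMem _).mp hx
  simp only [Set.mem_union, Set.mem_range, Set.mem_singleton_iff, not_or, not_exists] at hl
  apply (Set.ne_univ_iff_exists_notMem _).mpr
  refine ⟨l, ?_⟩
  simp only [Set.mem_union, Set.mem_range, Set.mem_singleton_iff, not_or, not_exists]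
  refine ⟨fun t ht => ?_, hl.2⟩
  change (if y t = 0 then min (x t) i else x t) = _ at ht
  split at ht
  · rcases min_cases (x t) i with ⟨h, _⟩ | ⟨h, _⟩ <;> rw [h] at ht
    · exact hl.1 t ht
    · exact hl.2 ht.symm
  · exact hl.1 t ht

lemma retr_mem_zero (hi : (i : ℕ) < n) {m : SimplexCategoryᵒᵖ}
    (x : Fin (m.unop.len + 1) →o Fin (n + 1)) (y : Fin (m.unop.len + 1) →o Fin 2)
    (hy : ∀ t, y t = 0) :
    Set.range (retrHom i x y) ∪ {i} ≠ Set.univ := by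
  apply (Set.ne_univ_iff_exists_notMem _).mpr
  refine ⟨Fin.last n, ?_⟩
  have hlt : i < Fin.last n := by
    rw [Fin.lt_iff_val_lt_val, Fin.val_last]; exact hi
  simp only [Set.mem_union, Set.mem_range, Set.mem_singleton_iff, not_or, not_exists]
  refine ⟨fun t ht => ?_, hlt.ne'⟩
  change (if y t = 0 then min (x t) i else x t) = _ at ht
  rw [hy t, if_pos rfl] at ht
  exact absurd (ht ▸ (min_le_right (x t) i)) (not_le.mpr hlt)

/-- The bottom retraction `Δ[n] ⊗ Δ[1] ⟶ Δ[n]`. -/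
def rBot : (Δ[n] ⊗ Δ[1] : SSet.{u}) ⟶ Δ[n] where
  app m := ↾fun p => stdSimplex.objMk (retrHom i (stdSimplex.asOrderHom p.1) (stdSimplex.asOrderHom p.2))
  naturality m m' f := by
    ext p
    rfl

/-- Inclusion at vertex 1, on the standard simplex. -/
def sBot : (Δ[n] : SSet.{u}) ⟶ Δ[n] ⊗ Δ[1] where
  app m := ↾fun x => (x, stdSimplex.objMk (OrderHom.const _ 1))
  naturality m m' f := by
    ext x
    rfl

/-- Inclusion at vertex 1, on the horn. -/
def sTopPre : (Λ[n, i] : SSet.{u}) ⟶ (Λ[n, i] : SSet.{u}) ⊗ Δ[1] where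
  app m := ↾fun x => (x, stdSimplex.objMk (OrderHom.const _ 1))
  naturality m m' f := by
    ext x
    rfl

/-- top-left component of the retraction. -/
def rTopLeft : ((Λ[n, i] : SSet.{u}) ⊗ Δ[1]) ⟶ Λ[n, i] where
  app m := ↾fun p => ⟨stdSimplex.objMk (retrHom i (stdSimplex.asOrderHom p.1.1) (stdSimplex.asOrderHom p.2)),
    retr_mem i _ _ p.1.2⟩
  naturality m m' f := by
    ext p
    rfl

/-- top-right component of the retraction. -/
def rTopRight (hi : (i : ℕ) < n) : ((Δ[n] : SSet.{u}) ⊗ Δ[0]) ⟶ Λ[n, i] where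
  app m := ↾fun p => ⟨stdSimplex.objMk (retrHom i (stdSimplex.asOrderHom p.1) (OrderHom.const _ 0)),
    retr_mem_zero i hi _ _ (fun _ => rfl)⟩
  naturality m m' f := by
    ext p
    rfl

lemma compat (hi : (i : ℕ) < n) :
    ((Λ[n, i] : SSet.{u}) ◁ vertexMap 0) ≫ rTopLeft i
      = (Λ[n, i].ι ▷ Δ[0]) ≫ rTopRight i hi := by
  ext m p
  rfl

/-- The top retraction out of the pushout. -/
noncomputable def rTop (hi : (i : ℕ) < n) : hornCorner.{u} n i 0 ⟶ Λ[n, i] :=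
  pushout.desc (rTopLeft i) (rTopRight i hi) (compat i hi)

end HornRetractAux

open HornRetractAux in
/-- For all `n ≥ 1` and `0 ≤ i < n`, the horn inclusion `Λ[n, i] → Δ[n]` is a retract,
in the arrow category of simplicial sets, of the inclusion
`(Λ[n, i] × Δ[1]) ∪ (Δ[n] × {0}) → Δ[n] × Δ[1]`. -/
theorem hornInclusion_retract_of_hornCornerIncl_zero
    (n : ℕ) (i : Fin (n + 1)) (hi : (i : ℕ) < n) :
    _root_.RetractArrow (Λ[n, i].ι) (hornCornerIncl.{u} n i 0) := by
  have key : ∀ (m : SimplexCategoryᵒᵖ) (x : Fin (m.unop.len + 1) →o Fin (n + 1)),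
      retrHom i x (stdSimplex.asOrderHom (stdSimplex.objMk (OrderHom.const _ 1) : (Δ[1] : SSet.{u}).obj m))
        = x := by
    intro m x
    refine OrderHom.ext _ _ (funext fun t => ?_)
    show (if (stdSimplex.asOrderHom (stdSimplex.objMk (OrderHom.const _ 1) : (Δ[1] : SSet.{u}).obj m)) t = 0
        then min (x t) i else x t) = x t
    exact if_neg (show ¬ (1 : Fin 2) = 0 by decide)
  refine ⟨Arrow.homMk (u := sTopPre i ≫ pushout.inl _ _) (v := sBot) ?_,
    Arrow.homMk (u := rTop i hi) (v := rBot i) ?_, ?_⟩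
  · dsimp only [Arrow.mk_hom, hornCornerIncl]
    erw [Category.assoc, pushout.inl_desc]
    ext m p <;> rfl
  · dsimp only [Arrow.mk_hom, rTop, hornCornerIncl]
    apply pushout.hom_ext
    · erw [pushout.inl_desc_assoc, pushout.inl_desc_assoc]
      ext m p
      rfl
    · erw [pushout.inr_desc_assoc, pushout.inr_desc_assoc]
      ext m p
      rfl
  · apply Arrow.hom_ext
    · dsimp only [Arrow.comp_left, Arrow.id_left, Arrow.homMk_left, rTop]
      erw [Category.assoc, pushout.inl_desc]
      ext m p
      apply Subtype.ext
      show stdSimplex.objMk (retrHom i (stdSimplex.asOrderHom p.1)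
        (stdSimplex.asOrderHom (stdSimplex.objMk (OrderHom.const _ 1) : (Δ[1] : SSet.{u}).obj m))) = p.1
      rw [key]
      rfl
    · ext m p
      show stdSimplex.objMk (retrHom i (stdSimplex.asOrderHom p)
        (stdSimplex.asOrderHom (stdSimplex.objMk (OrderHom.const _ 1) : (Δ[1] : SSet.{u}).obj m))) = p
      rw [key]
      rfl
end
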